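/- Let S be a propagator on nested Banach spaces (H_γ) satisfying ‖S_{s,t}u - u‖_{γ1} ≤ C|t-s|^{γ2-γ1} ‖u‖_{γ2} for γ1 ≤ γ2 ≤ γ1 + 1. Let Y : [0,T] → H_γ and Y' : [0,T] → L(ℝ^e, H_{γ-β}) be stochastic processes with sup_t ‖Y_t‖_{m,γ} ≤ M₀ and sup_t ‖Y'_t‖_{m,γ-β} ≤ M₁, and let X be α-Hölder with X_0 = 0, 0 < β' ≤ β ≤ α < 1. Define R^Y_{s,t} := δY_{s,t} - Y'_s δX_{s,t} and R̂^Y_{s,t} := Y_t - S_{s,t}Y_s - S_{s,t}Y'_s δX_{s,t}. Then ‖R^Y_{s,t} - R̂^Y_{s,t}‖_{m, γ-β-β'} ≤ C'(M₀ + M₁ |δX|_α T^{α-β}) |t-s|^{β+β'} for all (s,t) ∈ Δ₂. -/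

import Mathlib

open MeasureTheory ENNReal

private lemma elp_helper {Ω : Type*} [MeasurableSpace Ω] {μ : Measure Ω} {p : ℝ≥0∞}
    (f g : Ω → ℝ) (c M : ℝ) (hc : 0 ≤ c)
    (hbound : ∀ ω, ‖f ω‖ ≤ c * g ω)
    (hg : eLpNorm g p μ ≤ ENNReal.ofReal M) :
    eLpNorm f p μ ≤ ENNReal.ofReal (c * M) := by
  have h1 : eLpNorm f p μ ≤ eLpNorm (c • g) p μ := eLpNorm_mono_real hbound
  have h2 : eLpNorm (c • g) p μ = (‖c‖₊ : ℝ≥0∞) * eLpNorm g p μ := by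
    rw [eLpNorm_const_smul, enorm_eq_nnnorm]
  have h3 : (‖c‖₊ : ℝ≥0∞) = ENNReal.ofReal c := Real.enorm_eq_ofReal hc
  calc eLpNorm f p μ ≤ (‖c‖₊ : ℝ≥0∞) * eLpNorm g p μ := h1.trans_eq h2
    _ ≤ ENNReal.ofReal c * ENNReal.ofReal M := by
        rw [h3]; exact mul_le_mul_right hg _
    _ = ENNReal.ofReal (c * M) := (ENNReal.ofReal_mul hc).symm

/-- Comparison of the controlled-path remainder `R^Y` and the mild remainder `R̂^Y`:
`‖R^Y_{s,t} - R̂^Y_{s,t}‖_{m,γ-β-β'} ≲ (M₀ + M₁ |δX|_α T^{α-β}) |t-s|^{β+β'}`. -/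
theorem stmt7 {Ω V : Type*} [MeasurableSpace Ω] (μ : Measure Ω) [IsProbabilityMeasure μ]
    [NormedAddCommGroup V] [NormedSpace ℝ V]
    (T m α β β' CS M₀ M₁ HX : ℝ) (e : ℕ)
    (hT : 0 < T) (hm : 2 ≤ m) (hβ' : 0 < β') (hββ : β' ≤ β) (hβα : β ≤ α) (hα : α < 1)
    (hCS : 0 < CS) (hM₀ : 0 ≤ M₀) (hM₁ : 0 ≤ M₁) (hHX : 0 ≤ HX)
    -- the norms `|·|_{γ-β-β'}`, `|·|_{γ-β}`, `|·|_γ` of the monotone family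
    (na nb nc : Seminorm ℝ V)
    (S : ℝ → ℝ → V →ₗ[ℝ] V)
    -- smoothing estimates `‖S_{s,t}u - u‖_{γ1} ≤ C|t-s|^{γ2-γ1}‖u‖_{γ2}` for the two
    -- index pairs `(γ-β-β', γ)` and `(γ-β-β', γ-β)`
    (hS1 : ∀ s t u, 0 ≤ s → s ≤ t → t ≤ T → na (S s t u - u) ≤ CS * (t - s) ^ (β + β') * nc u)
    (hS2 : ∀ s t u, 0 ≤ s → s ≤ t → t ≤ T → na (S s t u - u) ≤ CS * (t - s) ^ β' * nb u)
    (X : ℝ → Fin e → ℝ) (hX0 : ∀ i, X 0 i = 0)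
    (hXhol : ∀ s t i, 0 ≤ s → s ≤ t → t ≤ T → |X t i - X s i| ≤ HX * (t - s) ^ α)
    (Y : ℝ → Ω → V) (Y' : ℝ → Ω → Fin e → V)
    (hY : ∀ t, 0 ≤ t → t ≤ T →
      eLpNorm (fun ω => nc (Y t ω)) (ENNReal.ofReal m) μ ≤ ENNReal.ofReal M₀)
    (hY' : ∀ t i, 0 ≤ t → t ≤ T →
      eLpNorm (fun ω => nb (Y' t ω i)) (ENNReal.ofReal m) μ ≤ ENNReal.ofReal M₁)
    (hmeas1 : ∀ s t : ℝ, AEStronglyMeasurable (fun ω => na (S s t (Y s ω) - Y s ω)) μ)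
    (hmeas2 : ∀ (s t : ℝ) (i : Fin e),
      AEStronglyMeasurable (fun ω => na (S s t (Y' s ω i) - Y' s ω i)) μ) :
    ∃ C' > 0, ∀ s t, 0 ≤ s → s ≤ t → t ≤ T →
      eLpNorm (fun ω =>
          na ((Y t ω - Y s ω - ∑ i, (X t i - X s i) • Y' s ω i)
            - (Y t ω - S s t (Y s ω) - ∑ i, (X t i - X s i) • S s t (Y' s ω i))))
        (ENNReal.ofReal m) μ
      ≤ ENNReal.ofReal (C' * (M₀ + M₁ * HX * T ^ (α - β)) * (t - s) ^ (β + β')) := by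
  set p : ℝ≥0∞ := ENNReal.ofReal m with hp
  have hp1 : 1 ≤ p := ENNReal.one_le_ofReal.mpr (by linarith)
  refine ⟨CS * (e + 1), by positivity, fun s t hs hst htT => ?_⟩
  have hsT : s ≤ T := hst.trans htT
  have hts0 : (0:ℝ) ≤ t - s := sub_nonneg.mpr hst
  -- key real estimate
  have hkey : (t - s) ^ α * (t - s) ^ β' ≤ T ^ (α - β) * (t - s) ^ (β + β') := by
    rcases eq_or_lt_of_le hst with rfl | hlt
    · simp [Real.zero_rpow (by linarith : α ≠ 0), Real.zero_rpow (by linarith : β + β' ≠ 0)]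
    · have h1 : (t - s) ^ α = (t - s) ^ (α - β) * (t - s) ^ β := by
        rw [← Real.rpow_add (by linarith)]; ring_nf
      have h2 : (t - s) ^ β * (t - s) ^ β' = (t - s) ^ (β + β') := by
        rw [← Real.rpow_add (by linarith)]
      have h3 : (t - s) ^ (α - β) ≤ T ^ (α - β) :=
        Real.rpow_le_rpow hts0 (by linarith) (by linarith)
      calc (t - s) ^ α * (t - s) ^ β'
          = (t - s) ^ (α - β) * ((t - s) ^ β * (t - s) ^ β') := by rw [h1]; ring
        _ ≤ T ^ (α - β) * ((t - s) ^ β * (t - s) ^ β') := by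
            apply mul_le_mul_of_nonneg_right h3; positivity
        _ = T ^ (α - β) * (t - s) ^ (β + β') := by rw [h2]
  set f₀ : Ω → ℝ := fun ω => na (S s t (Y s ω) - Y s ω) with hf₀
  set f : Fin e → Ω → ℝ :=
    fun i ω => |X t i - X s i| * na (S s t (Y' s ω i) - Y' s ω i) with hf
  -- pointwise bound
  have hpt : ∀ ω, ‖na ((Y t ω - Y s ω - ∑ i, (X t i - X s i) • Y' s ω i)
      - (Y t ω - S s t (Y s ω) - ∑ i, (X t i - X s i) • S s t (Y' s ω i)))‖
      ≤ (f₀ + ∑ i, f i) ω := by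
    intro ω
    have heq : (Y t ω - Y s ω - ∑ i, (X t i - X s i) • Y' s ω i)
        - (Y t ω - S s t (Y s ω) - ∑ i, (X t i - X s i) • S s t (Y' s ω i))
        = (S s t (Y s ω) - Y s ω)
          + ∑ i, (X t i - X s i) • (S s t (Y' s ω i) - Y' s ω i) := by
      simp only [smul_sub, Finset.sum_sub_distrib]; abel
    rw [Real.norm_eq_abs, abs_of_nonneg (apply_nonneg na _), heq]
    refine (map_add_le_add na _ _).trans (add_le_add le_rfl ?_)
    refine le_trans (Finset.le_sum_of_subadditive na (map_zero na).le (map_add_le_add na) _ _) ?_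
    rw [Finset.sum_apply]
    refine Finset.sum_le_sum fun i _ => ?_
    rw [map_smul_eq_mul, Real.norm_eq_abs]
  -- measurability
  have hmf : ∀ i : Fin e, AEStronglyMeasurable (f i) μ :=
    fun i => (hmeas2 s t i).const_mul _
  -- eLpNorm chain
  have hstep1 : eLpNorm (fun ω =>
      na ((Y t ω - Y s ω - ∑ i, (X t i - X s i) • Y' s ω i)
        - (Y t ω - S s t (Y s ω) - ∑ i, (X t i - X s i) • S s t (Y' s ω i)))) p μ
      ≤ eLpNorm f₀ p μ + ∑ i, eLpNorm (f i) p μ := by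
    refine (eLpNorm_mono_real hpt).trans ?_
    refine (eLpNorm_add_le (hmeas1 s t) ?_ hp1).trans ?_
    · have heqf : (∑ i : Fin e, f i) = fun a => ∑ i : Fin e, f i a := by
        funext a; exact Finset.sum_apply _ _ _
      rw [heqf]
      exact Finset.aestronglyMeasurable_fun_sum _ fun i _ => hmf i
    · exact add_le_add le_rfl (eLpNorm_sum_le (fun i _ => hmf i) hp1)
  -- bound each piece
  have hb₀ : eLpNorm f₀ p μ ≤ ENNReal.ofReal ((CS * (t - s) ^ (β + β')) * M₀) := by
    refine elp_helper _ (fun ω => nc (Y s ω)) _ _ (by positivity) (fun ω => ?_) (hY s hs hsT)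
    rw [Real.norm_eq_abs, abs_of_nonneg (apply_nonneg na _)]
    exact (hS1 s t _ hs hst htT).trans_eq (by ring)
  have hbi : ∀ i : Fin e, eLpNorm (f i) p μ
      ≤ ENNReal.ofReal ((HX * (t - s) ^ α * (CS * (t - s) ^ β')) * M₁) := by
    intro i
    refine elp_helper _ (fun ω => nb (Y' s ω i)) _ _ (by positivity) (fun ω => ?_)
      (hY' s i hs hsT)
    rw [Real.norm_eq_abs, abs_of_nonneg (by positivity : (0:ℝ) ≤ f i ω), hf]
    have h1 := hXhol s t i hs hst htT
    have h2 := hS2 s t (Y' s ω i) hs hst htT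
    calc |X t i - X s i| * na (S s t (Y' s ω i) - Y' s ω i)
        ≤ (HX * (t - s) ^ α) * (CS * (t - s) ^ β' * nb (Y' s ω i)) :=
          mul_le_mul h1 h2 (apply_nonneg _ _) (by positivity)
      _ = HX * (t - s) ^ α * (CS * (t - s) ^ β') * nb (Y' s ω i) := by ring
  -- combine
  refine hstep1.trans ?_
  have hsum : ∑ i : Fin e, eLpNorm (f i) p μ
      ≤ ENNReal.ofReal ((e : ℝ) * ((HX * (t - s) ^ α * (CS * (t - s) ^ β')) * M₁)) := by
    calc ∑ i : Fin e, eLpNorm (f i) p μ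
        ≤ ∑ _i : Fin e, ENNReal.ofReal ((HX * (t - s) ^ α * (CS * (t - s) ^ β')) * M₁) :=
          Finset.sum_le_sum fun i _ => hbi i
      _ = (e : ℝ≥0∞) * ENNReal.ofReal ((HX * (t - s) ^ α * (CS * (t - s) ^ β')) * M₁) := by
          simp [Finset.sum_const, nsmul_eq_mul]
      _ = ENNReal.ofReal ((e : ℝ) * ((HX * (t - s) ^ α * (CS * (t - s) ^ β')) * M₁)) := by
          rw [ENNReal.ofReal_mul (Nat.cast_nonneg e : (0:ℝ) ≤ (e:ℝ)), ENNReal.ofReal_natCast]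
  refine (add_le_add hb₀ hsum).trans ?_
  rw [← ENNReal.ofReal_add (by positivity) (by positivity)]
  refine ENNReal.ofReal_le_ofReal ?_
  have hTnn : (0:ℝ) ≤ T ^ (α - β) := by positivity
  have hPnn : (0:ℝ) ≤ (t - s) ^ (β + β') := by positivity
  have h2 : (e : ℝ) * ((HX * (t - s) ^ α * (CS * (t - s) ^ β')) * M₁)
      ≤ (e : ℝ) * (HX * CS * M₁ * (T ^ (α - β) * (t - s) ^ (β + β'))) := by
    have := mul_le_mul_of_nonneg_left hkey (by positivity : (0:ℝ) ≤ HX * CS * M₁)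
    nlinarith [this, Nat.cast_nonneg (α := ℝ) e]
  have t1 : (0:ℝ) ≤ CS * M₀ * (t - s) ^ (β + β') * (e : ℝ) :=
    mul_nonneg (mul_nonneg (mul_nonneg hCS.le hM₀) hPnn) (Nat.cast_nonneg e)
  have t2 : (0:ℝ) ≤ CS * M₁ * HX * T ^ (α - β) * (t - s) ^ (β + β') :=
    mul_nonneg (mul_nonneg (mul_nonneg (mul_nonneg hCS.le hM₁) hHX) hTnn) hPnn
  nlinarith [h2, t1, t2]
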